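/- arXiv:2401.02393 — 4 statements merged into one kernel-verified Lean document; each statement's English description precedes it below -/
import Mathlib

section
/- Let d, d₁, d₀ be natural numbers with d = 2·d₁ + d₀. For every real d×d matrix Λ that is skew-symmetric (Λᵀ = -Λ), there exist a natural number d₁ with 2·d₁ ≤ d, a family of reals η : Fin d₁ → ℝ with η k > 0 for every k, and a real orthogonal d×d matrix O (i.e. Oᵀ * O = 1) such that Λ = Oᵀ * Σ(η) * O, where Σ(η) is the canonical skew block matrix determined by η. -/
open Matrix
open scoped RealInnerProductSpace

/-- The canonical skew block matrix `Σ(η)` of size `d × d` determined by `η : Fin d₁ → ℝ`: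
its only nonzero entries are `Σ(η) (2k) (2k+1) = -η k` and `Σ(η) (2k+1) (2k) = η k`
for `k < d₁` (0-based indices); all other entries (in particular the last `d - 2d₁`
rows and columns) vanish. -/
def canonicalSkew (d d₁ : ℕ) (η : Fin d₁ → ℝ) : Matrix (Fin d) (Fin d) ℝ :=
  Matrix.of fun i j =>
    if h : i.val / 2 < d₁ ∧ i.val / 2 = j.val / 2 then
      if i.val % 2 = 0 ∧ j.val % 2 = 1 then -η ⟨i.val / 2, h.1⟩
      else if i.val % 2 = 1 ∧ j.val % 2 = 0 then η ⟨i.val / 2, h.1⟩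
      else 0
    else 0

lemma canonicalSkew_zero (d : ℕ) (η : Fin 0 → ℝ) : canonicalSkew d 0 η = 0 := by
  ext i j
  simp [canonicalSkew]

lemma canonicalSkew_submatrix (d m n : ℕ) (hm : 2 + m = d) (η₀ : ℝ) (η₂ : Fin n → ℝ) :
    (canonicalSkew d (n+1) (Fin.cons η₀ η₂)).submatrix
      (finSumFinEquiv.trans (finCongr hm)) (finSumFinEquiv.trans (finCongr hm)) =
    fromBlocks !![0, -η₀; η₀, 0] 0 0 (canonicalSkew m n η₂) := by
  ext i j
  rcases i with a | a <;> rcases j with b | b <;>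
    simp only [submatrix_apply, Equiv.trans_apply, finCongr_apply, Fin.coe_cast,
      finSumFinEquiv_apply_left, finSumFinEquiv_apply_right, Fin.coe_castAdd, Fin.coe_natAdd,
      fromBlocks_apply₁₁, fromBlocks_apply₁₂, fromBlocks_apply₂₁, fromBlocks_apply₂₂,
      canonicalSkew, Matrix.of_apply, Matrix.zero_apply]
  · fin_cases a <;> fin_cases b <;> simp [Fin.cons]
  · rw [dif_neg]; omega
  · rw [dif_neg]; omega
  · by_cases h : a.val / 2 < n ∧ a.val / 2 = b.val / 2
    · have h1 : (2 + a.val) / 2 = a.val / 2 + 1 := by omega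
      have h2 : (2 + b.val) / 2 = b.val / 2 + 1 := by omega
      have h3 : (2 + a.val) % 2 = a.val % 2 := by omega
      have h4 : (2 + b.val) % 2 = b.val % 2 := by omega
      rw [dif_pos (by omega), dif_pos h]
      have hidx : (⟨(2 + a.val) / 2, by omega⟩ : Fin (n+1)) = Fin.succ ⟨a.val / 2, h.1⟩ := by
        ext; simp [h1]
      rw [h3, h4, hidx, Fin.cons_succ]
    · rw [dif_neg (by omega), dif_neg h]

lemma two_entries (c : ℝ) (a b : Fin 2) :
    !![0, -c; c, 0] a b =
      if a.val = 0 ∧ b.val = 1 then -c else if a.val = 1 ∧ b.val = 0 then c else 0 := by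
  fin_cases a <;> fin_cases b <;> simp

/-- analytic step: a nonzero skew matrix has an orthonormal pair spanning an invariant plane. -/
lemma skew_exists_pair (d : ℕ) (Λ : Matrix (Fin d) (Fin d) ℝ) (hΛ : Λᵀ = -Λ) (hΛ0 : Λ ≠ 0) :
    ∃ (vv ww : Fin d → ℝ) (c : ℝ), 0 < c ∧ vv ⬝ᵥ vv = 1 ∧ ww ⬝ᵥ ww = 1 ∧ vv ⬝ᵥ ww = 0 ∧
      Λ *ᵥ vv = c • ww ∧ Λ *ᵥ ww = -(c • vv) := by
  classical
  set S := Λᵀ * Λ with hSdef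
  have hS : S.IsHermitian := by
    have := Matrix.isHermitian_conjTranspose_mul_self Λ
    rwa [Matrix.conjTranspose_eq_transpose_of_trivial] at this
  set b := hS.eigenvectorBasis with hbdef
  have hid : ∀ x y : EuclideanSpace ℝ (Fin d),
      (inner ℝ x y : ℝ) = (x : Fin d → ℝ) ⬝ᵥ (y : Fin d → ℝ) := by
    intro x y
    simp [PiLp.inner_apply, dotProduct, starRingEnd_apply]
    exact Finset.sum_congr rfl (fun _ _ => mul_comm _ _)
  have hbd : ∀ i j, (b i : Fin d → ℝ) ⬝ᵥ (b j : Fin d → ℝ) = if i = j then 1 else 0 := by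
    intro i j
    rw [← hid, orthonormal_iff_ite.mp b.orthonormal]
  have : ∃ i₀, Λ *ᵥ (b i₀ : Fin d → ℝ) ≠ 0 := by
    by_contra hall
    push_neg at hall
    apply hΛ0
    have h0 : Matrix.toEuclideanLin Λ = 0 := by
      apply b.toBasis.ext
      intro i
      rw [OrthonormalBasis.coe_toBasis]
      simp only [Matrix.toEuclideanLin_apply, LinearMap.zero_apply]
      rw [hall i]; rfl
    simpa using (LinearEquiv.map_eq_zero_iff Matrix.toEuclideanLin).mp h0
  obtain ⟨i₀, hi₀⟩ := this
  set μ := hS.eigenvalues i₀ with hμdef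
  set vv : Fin d → ℝ := (b i₀ : Fin d → ℝ) with hvvdef
  have hSv : S *ᵥ vv = μ • vv := hS.mulVec_eigenvectorBasis i₀
  have hvv : vv ⬝ᵥ vv = 1 := by simpa using hbd i₀ i₀
  have hkey : μ = (Λ *ᵥ vv) ⬝ᵥ (Λ *ᵥ vv) := by
    have h1 : vv ⬝ᵥ (S *ᵥ vv) = μ := by
      rw [hSv, dotProduct_smul, hvv]; simp
    have h2 : vv ⬝ᵥ (S *ᵥ vv) = (Λ *ᵥ vv) ⬝ᵥ (Λ *ᵥ vv) := by
      rw [hSdef, ← Matrix.mulVec_mulVec, Matrix.dotProduct_mulVec, Matrix.vecMul_transpose]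
    rw [← h1, h2]
  have hμpos : 0 < μ := by
    rw [hkey]
    rcases (Finset.sum_nonneg (fun i _ => mul_self_nonneg ((Λ *ᵥ vv) i))).lt_or_eq with h | h
    · exact h
    · exact absurd (dotProduct_self_eq_zero.mp h.symm) hi₀
  set c := Real.sqrt μ with hcdef
  have hc : 0 < c := Real.sqrt_pos.mpr hμpos
  have hc2 : c * c = μ := Real.mul_self_sqrt hμpos.le
  set ww : Fin d → ℝ := c⁻¹ • (Λ *ᵥ vv) with hwwdef
  have hΛv : Λ *ᵥ vv = c • ww := by
    rw [hwwdef, smul_inv_smul₀ hc.ne']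
  have hΛΛv : Λ *ᵥ (Λ *ᵥ vv) = -(μ • vv) := by
    rw [Matrix.mulVec_mulVec]
    have : Λ * Λ = -S := by rw [hSdef, hΛ]; simp
    rw [this, Matrix.neg_mulVec, hSv]
  have hΛw : Λ *ᵥ ww = -(c • vv) := by
    rw [hwwdef, Matrix.mulVec_smul, hΛΛv, smul_neg, smul_smul, ← hc2]
    have hcc : c⁻¹ * (c * c) = c := by field_simp
    rw [hcc]
  have hww : ww ⬝ᵥ ww = 1 := by
    rw [hwwdef, smul_dotProduct, dotProduct_smul, ← hkey, smul_eq_mul, smul_eq_mul, ← hc2]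
    field_simp
  have hvw : vv ⬝ᵥ ww = 0 := by
    have ht : vv ⬝ᵥ (Λ *ᵥ vv) = 0 := by
      have h2 : vv ᵥ* Λ = -(Λ *ᵥ vv) := by
        have hΛ' : Λ = -Λᵀ := by rw [hΛ]; simp
        nth_rewrite 1 [hΛ']
        rw [Matrix.vecMul_neg, Matrix.vecMul_transpose]
      have h1 := Matrix.dotProduct_mulVec vv Λ vv
      rw [h2, neg_dotProduct, dotProduct_comm] at h1
      rw [dotProduct_comm]
      linarith
    rw [hwwdef, dotProduct_smul, ht, smul_eq_mul, mul_zero]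
  exact ⟨vv, ww, c, hc, hvv, hww, hvw, hΛv, hΛw⟩

lemma skew_main : ∀ d : ℕ, ∀ Λ : Matrix (Fin d) (Fin d) ℝ, Λᵀ = -Λ →
    ∃ n, 2 * n ≤ d ∧ ∃ η : Fin n → ℝ, ∃ O : Matrix (Fin d) (Fin d) ℝ,
      (∀ k, 0 < η k) ∧ Oᵀ * O = 1 ∧ Λ = Oᵀ * canonicalSkew d n η * O := by
  intro d
  induction d using Nat.strong_induction_on with
  | _ d IH =>
  intro Λ hΛ
  classical
  by_cases hΛ0 : Λ = 0
  · refine ⟨0, by omega, Fin.elim0, 1, (fun k => k.elim0), by simp, ?_⟩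
    rw [hΛ0, canonicalSkew_zero]
    simp
  -- d ≥ 2
  have hd2 : 2 ≤ d := by
    obtain ⟨i, j, hij⟩ : ∃ i j, Λ i j ≠ 0 := by
      by_contra h
      push_neg at h
      exact hΛ0 (by ext i j; simpa using h i j)
    have hne : i ≠ j := by
      rintro rfl
      have := congrFun (congrFun hΛ i) i
      simp only [transpose_apply, Matrix.neg_apply] at this
      exact hij (by linarith)
    have := i.2
    have := j.2
    have : i.val ≠ j.val := fun h => hne (Fin.ext h)
    omega
  set m := d - 2 with hmdef
  have hm : 2 + m = d := by omega
  obtain ⟨vv, ww, c, hc, hvv, hww, hvw, hΛv, hΛw⟩ := skew_exists_pair d Λ hΛ hΛ0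
  have hid : ∀ x y : EuclideanSpace ℝ (Fin d),
      (inner ℝ x y : ℝ) = (x : Fin d → ℝ) ⬝ᵥ (y : Fin d → ℝ) := by
    intro x y
    simp [PiLp.inner_apply, dotProduct, starRingEnd_apply]
    exact Finset.sum_congr rfl (fun _ _ => mul_comm _ _)
  set z0 : Fin d := ⟨0, by omega⟩ with hz0
  set z1 : Fin d := ⟨1, by omega⟩ with hz1
  have hz01 : z0 ≠ z1 := by simp [hz0, hz1, Fin.ext_iff]
  -- extend to an orthonormal basis
  set f : Fin d → EuclideanSpace ℝ (Fin d) := fun j => if j.val = 0 then WithLp.toLp 2 vv else WithLp.toLp 2 ww with hfdef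
  set s : Set (Fin d) := {j | j.val < 2} with hsdef
  have hOn : Orthonormal ℝ (s.restrict f) := by
    rw [orthonormal_iff_ite]
    rintro ⟨i, hi⟩ ⟨j, hj⟩
    simp only [Set.restrict_apply, hfdef]
    rw [hid]
    have hi2 : i.val = 0 ∨ i.val = 1 := by simp [hsdef] at hi; omega
    have hj2 : j.val = 0 ∨ j.val = 1 := by simp [hsdef] at hj; omega
    rcases hi2 with hi0 | hi1 <;> rcases hj2 with hj0 | hj1
    · have : i = j := Fin.ext (by omega)
      simp [Set.restrict, this, hj0, hvv]
    · have : (⟨i, hi⟩ : s) ≠ ⟨j, hj⟩ := by simp [Fin.ext_iff]; omega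
      simp [Set.restrict, hi0, hj1, this, hvw]
    · have : (⟨i, hi⟩ : s) ≠ ⟨j, hj⟩ := by simp [Fin.ext_iff]; omega
      rw [dotProduct_comm] at hvw
      simp [Set.restrict, hi1, hj0, this, hvw]
    · have : i = j := Fin.ext (by omega)
      simp [Set.restrict, this, hj1, hww]
  obtain ⟨b', hb'⟩ := hOn.exists_orthonormalBasis_extension_of_card_eq
    (by simp [finrank_euclideanSpace])
  have hb'0 : (b' z0 : Fin d → ℝ) = vv := by
    have := hb' z0 (by simp [hsdef, hz0])
    rw [this]; simp [hfdef, hz0]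
  have hb'1 : (b' z1 : Fin d → ℝ) = ww := by
    have := hb' z1 (by simp [hsdef, hz1])
    rw [this]; simp [hfdef, hz1]
  have hb'd : ∀ i j, (b' i : Fin d → ℝ) ⬝ᵥ (b' j : Fin d → ℝ) = if i = j then 1 else 0 := by
    intro i j
    rw [← hid, orthonormal_iff_ite.mp b'.orthonormal]
  -- change of basis matrix
  set O₁ : Matrix (Fin d) (Fin d) ℝ := Matrix.of (fun i j => (b' i : Fin d → ℝ) j) with hO₁def
  have hO₁r : O₁ * O₁ᵀ = 1 := by
    ext i j
    rw [Matrix.mul_apply, Matrix.one_apply, ← hb'd i j]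
    simp [hO₁def, dotProduct]
  have hO₁ : O₁ᵀ * O₁ = 1 := mul_eq_one_comm.mp hO₁r
  set M := O₁ * Λ * O₁ᵀ with hMdef
  have hM : ∀ i j, M i j = (b' i : Fin d → ℝ) ⬝ᵥ (Λ *ᵥ (b' j : Fin d → ℝ)) := by
    intro i j
    rw [hMdef, Matrix.mul_apply]
    simp only [Matrix.mul_apply, transpose_apply, hO₁def, Matrix.of_apply, dotProduct,
      Matrix.mulVec, dotProduct, Finset.mul_sum, Finset.sum_mul]
    rw [Finset.sum_comm]
    apply Finset.sum_congr rfl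
    intro k _
    apply Finset.sum_congr rfl
    intro l _
    ring
  have hMc0 : ∀ i, M i z0 = c * (if i = z1 then 1 else 0) := by
    intro i
    rw [hM, hb'0, hΛv, dotProduct_smul, ← hb'1, hb'd, smul_eq_mul]
  have hMc1 : ∀ i, M i z1 = -(c * (if i = z0 then 1 else 0)) := by
    intro i
    rw [hM, hb'1, hΛw, dotProduct_neg, dotProduct_smul, ← hb'0, hb'd, smul_eq_mul]
  have hMskew : Mᵀ = -M := by
    rw [hMdef, Matrix.transpose_mul, Matrix.transpose_mul, Matrix.transpose_transpose, hΛ]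
    simp [Matrix.mul_assoc]
  have hMr : ∀ i j, M i j = - M j i := by
    intro i j
    have := congrFun (congrFun hMskew j) i
    simpa using this
  set e : Fin 2 ⊕ Fin m ≃ Fin d := finSumFinEquiv.trans (finCongr hm) with hedef
  have he_l : ∀ a : Fin 2, (e (Sum.inl a)).val = a.val := by
    intro a; simp [hedef]
  have he_r : ∀ a : Fin m, (e (Sum.inr a)).val = 2 + a.val := by
    intro a; simp [hedef]
  set C : Matrix (Fin m) (Fin m) ℝ :=
    Matrix.of (fun a b => M (e (Sum.inr a)) (e (Sum.inr b))) with hCdef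
  have hCskew : Cᵀ = -C := by
    ext a b
    simp only [hCdef, transpose_apply, Matrix.of_apply, Matrix.neg_apply]
    exact hMr _ _
  obtain ⟨n, hn, η₂, O₂, hη₂, hO₂, hCrep⟩ := IH m (by omega) C hCskew
  -- block structure
  have hsub : M.submatrix e e = fromBlocks !![0, -c; c, 0] 0 0 C := by
    ext i j
    have heL : ∀ a : Fin 2, a.val = 0 → e (Sum.inl a) = z0 := by
      intro a ha; exact Fin.ext (by rw [he_l, ha, hz0])
    have heL1 : ∀ a : Fin 2, a.val = 1 → e (Sum.inl a) = z1 := by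
      intro a ha; exact Fin.ext (by rw [he_l, ha, hz1])
    have hne0 : ∀ a : Fin m, e (Sum.inr a) ≠ z0 := by
      intro a h; have := congrArg Fin.val h; rw [he_r] at this; simp [hz0] at this
    have hne1 : ∀ a : Fin m, e (Sum.inr a) ≠ z1 := by
      intro a h; have := congrArg Fin.val h; rw [he_r] at this; simp [hz1] at this; omega
    rcases i with a | a <;> rcases j with b | b
    · rw [submatrix_apply, fromBlocks_apply₁₁, two_entries]
      have ha : a.val = 0 ∨ a.val = 1 := by omega
      have hb : b.val = 0 ∨ b.val = 1 := by omega
      rcases ha with ha | ha <;> rcases hb with hb | hb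
      · rw [heL a ha, heL b hb, hMc0, if_neg hz01, if_neg (by omega), if_neg (by omega)]
        simp
      · rw [heL a ha, heL1 b hb, hMc1, if_pos rfl, if_pos ⟨ha, hb⟩]
        simp
      · rw [heL1 a ha, heL b hb, hMc0, if_pos rfl, if_neg (by omega), if_pos ⟨ha, hb⟩]
        simp
      · rw [heL1 a ha, heL1 b hb, hMc1, if_neg (Ne.symm hz01), if_neg (by omega),
          if_neg (by omega)]
        simp
    · rw [submatrix_apply, fromBlocks_apply₁₂, Matrix.zero_apply]
      have ha : a.val = 0 ∨ a.val = 1 := by omega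
      rcases ha with ha | ha
      · rw [heL a ha, hMr, hMc0, if_neg (hne1 b)]; simp
      · rw [heL1 a ha, hMr, hMc1, if_neg (hne0 b)]; simp
    · rw [submatrix_apply, fromBlocks_apply₂₁, Matrix.zero_apply]
      have hb : b.val = 0 ∨ b.val = 1 := by omega
      rcases hb with hb | hb
      · rw [heL b hb, hMc0, if_neg (hne1 a)]; simp
      · rw [heL1 b hb, hMc1, if_neg (hne0 a)]; simp
    · simp [hCdef]
  -- assemble
  set K : Matrix (Fin 2 ⊕ Fin m) (Fin 2 ⊕ Fin m) ℝ :=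
    fromBlocks !![0, -c; c, 0] 0 0 (canonicalSkew m n η₂) with hKdef
  set P : Matrix (Fin 2 ⊕ Fin m) (Fin 2 ⊕ Fin m) ℝ :=
    fromBlocks (1 : Matrix (Fin 2) (Fin 2) ℝ) 0 0 O₂ with hPdef
  have hPt : Pᵀ = fromBlocks (1 : Matrix (Fin 2) (Fin 2) ℝ) 0 0 O₂ᵀ := by
    rw [hPdef, Matrix.fromBlocks_transpose]; simp
  have hPP : Pᵀ * P = 1 := by
    rw [hPt, hPdef, Matrix.fromBlocks_multiply]
    simp [hO₂, Matrix.fromBlocks_one]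
  have hPKP : Pᵀ * K * P = fromBlocks !![0, -c; c, 0] 0 0 C := by
    rw [hPt, hKdef, hPdef, Matrix.fromBlocks_multiply, Matrix.fromBlocks_multiply]
    simp [hCrep, Matrix.mul_assoc]
  set η : Fin (n+1) → ℝ := Fin.cons c η₂ with hηdef
  set Q : Matrix (Fin d) (Fin d) ℝ := P.submatrix e.symm e.symm with hQdef
  have hQQ : Qᵀ * Q = 1 := by
    rw [hQdef, transpose_submatrix, Matrix.submatrix_mul_equiv, hPP, Matrix.submatrix_one_equiv]
  have hcanon : canonicalSkew d (n+1) η = K.submatrix e.symm e.symm := by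
    rw [hKdef, ← canonicalSkew_submatrix d m n hm c η₂]
    ext i j
    simp [hedef, hηdef]
  have hQKQ : Qᵀ * canonicalSkew d (n+1) η * Q = M := by
    rw [hcanon, hQdef, transpose_submatrix, Matrix.submatrix_mul_equiv,
      Matrix.submatrix_mul_equiv, hPKP, ← hsub, Matrix.submatrix_submatrix]
    simp
  refine ⟨n + 1, by omega, η, Q * O₁, ?_, ?_, ?_⟩
  · intro k
    refine Fin.cases ?_ (fun i => ?_) k
    · simpa [hηdef] using hc
    · simpa [hηdef] using hη₂ i
  · rw [Matrix.transpose_mul, Matrix.mul_assoc, ← Matrix.mul_assoc Qᵀ, hQQ, Matrix.one_mul, hO₁]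
  · rw [Matrix.transpose_mul]
    have hfin : Λ = O₁ᵀ * M * O₁ := by
      rw [hMdef]
      simp only [Matrix.mul_assoc]
      rw [hO₁, Matrix.mul_one, ← Matrix.mul_assoc, hO₁, Matrix.one_mul]
    rw [hfin, ← hQKQ]
    simp only [Matrix.mul_assoc]

/-- Decomposition of an anti-symmetric real matrix: any skew-symmetric `Λ` of size `d × d`
(with `d = 2·d₁ + d₀`) can be written as `Λ = Oᵀ * Σ(η) * O` with `O` orthogonal and
`η` the positive parts of the nonzero conjugate eigenvalue pairs. -/
theorem antisym_matrix_decomposition (d d₁ d₀ : ℕ) (hd : d = 2 * d₁ + d₀)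
    (Λ : Matrix (Fin d) (Fin d) ℝ) (hΛ : Λᵀ = -Λ) :
    ∃ (d₁' : ℕ) (_ : 2 * d₁' ≤ d) (η : Fin d₁' → ℝ) (O : Matrix (Fin d) (Fin d) ℝ),
      (∀ k, 0 < η k) ∧ Oᵀ * O = 1 ∧ Λ = Oᵀ * canonicalSkew d d₁' η * O := by
  obtain ⟨n, hn, η, O, h1, h2, h3⟩ := skew_main d Λ hΛ
  exact ⟨n, hn, η, O, h1, h2, h3⟩
end

section
/- Let d₁, d₀ be natural numbers, d = 2·d₁ + d₀, η : Fin d₁ → ℝ, O a real orthogonal d×d matrix (Oᵀ * O = 1), and Λ = Oᵀ * Σ(η) * O. Then for every vector w : Fin d → ℝ one has w ⬝ᵥ ((Λ * Λᵀ).mulVec w) = ∑_{k < d₁} (η k)² · ( ((O.mulVec w) (2k))² + ((O.mulVec w) (2k+1))² ). -/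
open Matrix

/-- For `d = 2·d₁ + d₀` and `k : Fin d₁`, the index `2k` viewed in `Fin d`. -/
def idx0 {d₁ d₀ : ℕ} (k : Fin d₁) : Fin (2 * d₁ + d₀) :=
  ⟨2 * k.val, by have := k.isLt; omega⟩

/-- For `d = 2·d₁ + d₀` and `k : Fin d₁`, the index `2k+1` viewed in `Fin d`. -/
def idx1 {d₁ d₀ : ℕ} (k : Fin d₁) : Fin (2 * d₁ + d₀) :=
  ⟨2 * k.val + 1, by have := k.isLt; omega⟩

lemma aux_sum_range_two_mul (f : ℕ → ℝ) (n : ℕ) :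
    ∑ i ∈ Finset.range (2 * n), f i = ∑ k ∈ Finset.range n, (f (2 * k) + f (2 * k + 1)) := by
  induction n with
  | zero => simp
  | succ n ih =>
    have h2 : 2 * (n + 1) = 2 * n + 1 + 1 := by ring
    rw [h2, Finset.sum_range_succ, Finset.sum_range_succ, ih, Finset.sum_range_succ]
    ring

lemma canonicalSkew_col0 {d₁ d₀ : ℕ} (η : Fin d₁ → ℝ) (k : Fin d₁) (i : Fin (2 * d₁ + d₀)) :
    canonicalSkew (2 * d₁ + d₀) d₁ η i (idx0 k) = if i = idx1 k then η k else 0 := by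
  by_cases hik : i = idx1 k
  · subst hik
    have h2 : (2 * (k : ℕ) + 1) / 2 = (k : ℕ) := by omega
    simp only [canonicalSkew, idx0, idx1, of_apply]
    rw [dif_pos ⟨by simpa [h2] using k.isLt, by omega⟩]
    rw [if_neg (by omega), if_pos ⟨by omega, by omega⟩]
    congr 1
    exact Fin.ext h2
  · rw [if_neg hik]
    have hi : (i : ℕ) ≠ 2 * (k : ℕ) + 1 := fun h => hik (Fin.ext (by simpa [idx1] using h))
    simp only [canonicalSkew, idx0, of_apply]
    split_ifs with h h1 h2 <;> first | rfl | (exfalso; omega)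

lemma canonicalSkew_col1 {d₁ d₀ : ℕ} (η : Fin d₁ → ℝ) (k : Fin d₁) (i : Fin (2 * d₁ + d₀)) :
    canonicalSkew (2 * d₁ + d₀) d₁ η i (idx1 k) = if i = idx0 k then -η k else 0 := by
  by_cases hik : i = idx0 k
  · subst hik
    have h2 : (2 * (k : ℕ)) / 2 = (k : ℕ) := by omega
    simp only [canonicalSkew, idx0, idx1, of_apply]
    rw [dif_pos ⟨by simpa [h2] using k.isLt, by omega⟩]
    rw [if_pos ⟨by omega, by omega⟩]
    congr 2
    exact Fin.ext h2
  · rw [if_neg hik]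
    have hi : (i : ℕ) ≠ 2 * (k : ℕ) := fun h => hik (Fin.ext (by simpa [idx0] using h))
    simp only [canonicalSkew, idx1, of_apply]
    split_ifs with h h1 h2 <;> first | rfl | (exfalso; omega)

lemma canonicalSkew_colz {d₁ d₀ : ℕ} (η : Fin d₁ → ℝ) (j i : Fin (2 * d₁ + d₀))
    (hj : 2 * d₁ ≤ (j : ℕ)) : canonicalSkew (2 * d₁ + d₀) d₁ η i j = 0 := by
  simp only [canonicalSkew, of_apply]
  split_ifs with h h1 h2 <;> first | rfl | (exfalso; omega)

/-- For `Λ = Oᵀ Σ(η) O` with `O` orthogonal, the quadratic form `wᵀ Λ Λᵀ w` equals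
`∑_{k<d₁} η_k² ((Ow)_{2k}² + (Ow)_{2k+1}²)`. -/
theorem quadratic_form_LambdaLambdaT (d₁ d₀ : ℕ) (η : Fin d₁ → ℝ)
    (O : Matrix (Fin (2 * d₁ + d₀)) (Fin (2 * d₁ + d₀)) ℝ) (hO : Oᵀ * O = 1)
    (Λ : Matrix (Fin (2 * d₁ + d₀)) (Fin (2 * d₁ + d₀)) ℝ)
    (hΛ : Λ = Oᵀ * canonicalSkew (2 * d₁ + d₀) d₁ η * O)
    (w : Fin (2 * d₁ + d₀) → ℝ) :
    w ⬝ᵥ ((Λ * Λᵀ).mulVec w) =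
      ∑ k : Fin d₁, (η k) ^ 2 *
        ((O.mulVec w (idx0 k)) ^ 2 + (O.mulVec w (idx1 k)) ^ 2) := by
  set S := canonicalSkew (2 * d₁ + d₀) d₁ η with hS
  set v : Fin (2 * d₁ + d₀) → ℝ := O *ᵥ w with hv
  set u : Fin (2 * d₁ + d₀) → ℝ := Sᵀ *ᵥ v with hu
  have hOOt : O * Oᵀ = 1 := mul_eq_one_comm.mp hO
  have hΛT : Λᵀ = Oᵀ * Sᵀ * O := by
    rw [hΛ]; simp [Matrix.transpose_mul, Matrix.mul_assoc]
  -- reduce to u ⬝ᵥ u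
  have h1 : w ⬝ᵥ (Λ * Λᵀ) *ᵥ w = u ⬝ᵥ u := by
    calc w ⬝ᵥ (Λ * Λᵀ) *ᵥ w = (Λᵀ *ᵥ w) ⬝ᵥ (Λᵀ *ᵥ w) := by
          rw [← mulVec_mulVec, dotProduct_mulVec, ← mulVec_transpose]
      _ = (Oᵀ *ᵥ u) ⬝ᵥ (Oᵀ *ᵥ u) := by
          rw [hΛT, hu, hv, ← mulVec_mulVec, ← mulVec_mulVec]
      _ = u ⬝ᵥ u := by
          rw [dotProduct_mulVec, vecMul_transpose, mulVec_mulVec, hOOt, one_mulVec]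
  rw [h1]
  -- entries of u
  have hu0 : ∀ k : Fin d₁, u (idx0 k) = η k * v (idx1 k) := by
    intro k
    show ∑ i, Sᵀ (idx0 k) i * v i = _
    simp only [Matrix.transpose_apply, hS, canonicalSkew_col0, ite_mul, zero_mul]
    simp [Finset.sum_ite_eq']
  have hu1 : ∀ k : Fin d₁, u (idx1 k) = -η k * v (idx0 k) := by
    intro k
    show ∑ i, Sᵀ (idx1 k) i * v i = _
    simp only [Matrix.transpose_apply, hS, canonicalSkew_col1, ite_mul, zero_mul]
    simp [Finset.sum_ite_eq']
  have huz : ∀ j : Fin (2 * d₁ + d₀), 2 * d₁ ≤ (j : ℕ) → u j = 0 := by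
    intro j hj
    show ∑ i, Sᵀ j i * v i = 0
    apply Finset.sum_eq_zero
    intro i _
    rw [Matrix.transpose_apply, hS, canonicalSkew_colz η j i hj, zero_mul]
  -- turn the Fin sum into a range sum
  set g : ℕ → ℝ := fun n => if h : n < 2 * d₁ + d₀ then u ⟨n, h⟩ * u ⟨n, h⟩ else 0 with hg
  have e1 : u ⬝ᵥ u = ∑ n ∈ Finset.range (2 * d₁ + d₀), g n := by
    rw [← Fin.sum_univ_eq_sum_range]
    apply Finset.sum_congr rfl
    intro i _
    rw [hg]
    simp [dotProduct]
  have e2 : ∑ n ∈ Finset.range (2 * d₁ + d₀), g n = ∑ n ∈ Finset.range (2 * d₁), g n := by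
    symm
    apply Finset.sum_subset (Finset.range_subset_range.mpr (by omega))
    intro n hn hn'
    simp only [Finset.mem_range] at hn hn'
    rw [hg]
    simp only []
    rw [dif_pos hn]
    rw [huz ⟨n, hn⟩ (by simpa using hn'), mul_zero]
  have e3 : ∑ n ∈ Finset.range (2 * d₁), g n
      = ∑ k ∈ Finset.range d₁, (g (2 * k) + g (2 * k + 1)) :=
    aux_sum_range_two_mul g d₁
  have e4 : ∑ k ∈ Finset.range d₁, (g (2 * k) + g (2 * k + 1))
      = ∑ k : Fin d₁, (g (2 * (k : ℕ)) + g (2 * (k : ℕ) + 1)) :=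
    (Fin.sum_univ_eq_sum_range (fun n => g (2 * n) + g (2 * n + 1)) d₁).symm
  rw [e1, e2, e3, e4]
  apply Finset.sum_congr rfl
  intro k _
  have hk0 : (2 * (k : ℕ)) < 2 * d₁ + d₀ := by have := k.isLt; omega
  have hk1 : (2 * (k : ℕ) + 1) < 2 * d₁ + d₀ := by have := k.isLt; omega
  have g0 : g (2 * (k : ℕ)) = u (idx0 k) * u (idx0 k) := by rw [hg]; simp only []; rw [dif_pos hk0]; rfl
  have g1 : g (2 * (k : ℕ) + 1) = u (idx1 k) * u (idx1 k) := by rw [hg]; simp only []; rw [dif_pos hk1]; rfl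
  rw [g0, g1, hu0 k, hu1 k]
  ring
end

section
/- Let d₁, d₀ be natural numbers, d = 2·d₁ + d₀, η : Fin d₁ → ℝ, O a real orthogonal d×d matrix (Oᵀ * O = 1), and Λ = Oᵀ * Σ(η) * O. Let h : Fin d → ℝ satisfy h (2k) = h (2k+1) for all k < d₁, and define 𝓛 : (Fin d → ℝ) → ℝ by 𝓛(w) = exp( ∑_{i} h i · ((O.mulVec w) i)² ). Then for every w : Fin d → ℝ, ∑_{j} ((Λᵀ.mulVec w) j) · ∂𝓛/∂wⱼ (w) = 0, where ∂𝓛/∂wⱼ (w) denotes the derivative of the function s ↦ 𝓛(Function.update w j s) at s = w j. -/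
open Matrix

/-- Auxiliary pairing involution swapping `2k ↔ 2k+1` and fixing the tail. -/
def flipIdx (d₁ d₀ : ℕ) (i : Fin (2*d₁+d₀)) : Fin (2*d₁+d₀) :=
  if h2 : i.val < 2*d₁ then
    (if hp : i.val % 2 = 0 then ⟨i.val+1, by have := i.isLt; omega⟩
     else ⟨i.val-1, by have := i.isLt; omega⟩)
  else i

/-- The skew quadratic form weighted by a block-constant `h` vanishes. -/
theorem skew_quad_zero (d₁ d₀ : ℕ) (η : Fin d₁ → ℝ) (h u : Fin (2*d₁+d₀) → ℝ)
    (hpair : ∀ (k : ℕ) (hk : k < d₁) (h1 : 2*k+1 < 2*d₁+d₀) (h0 : 2*k < 2*d₁+d₀),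
      h ⟨2*k, h0⟩ = h ⟨2*k+1, h1⟩) :
    ∑ i, h i * u i * ((canonicalSkew (2*d₁+d₀) d₁ η)ᵀ.mulVec u) i = 0 := by
  have expand : ∀ i : Fin (2*d₁+d₀), ((canonicalSkew (2*d₁+d₀) d₁ η)ᵀ.mulVec u) i
      = ∑ j : Fin (2*d₁+d₀), canonicalSkew (2*d₁+d₀) d₁ η j i * u j := by
    intro i; simp [Matrix.mulVec, dotProduct, Matrix.transpose_apply]
  have col0 : ∀ (k : ℕ) (hk : k < d₁),
      ((canonicalSkew (2*d₁+d₀) d₁ η)ᵀ.mulVec u) ⟨2*k, by omega⟩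
        = η ⟨k, hk⟩ * u ⟨2*k+1, by omega⟩ := by
    intro k hk
    rw [expand, Finset.sum_eq_single (⟨2*k+1, by omega⟩ : Fin (2*d₁+d₀))]
    · simp only [canonicalSkew, Matrix.of_apply, Fin.val_mk]
      rw [dif_pos (by constructor <;> omega)]
      rw [if_neg (by omega), if_pos (by omega)]
      simp only [show (2*k+1)/2 = k from by omega]
    · intro b _ hb
      simp only [canonicalSkew, Matrix.of_apply]
      split
      · rename_i hc
        split_ifs with hb1 hb2
        · exfalso; apply hb; apply Fin.ext
          simp only [Fin.val_mk] at *
          omega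
        · exfalso; apply hb; apply Fin.ext
          simp only [Fin.val_mk] at *
          omega
        · exact zero_mul _
      · exact zero_mul _
    · intro hn; exact absurd (Finset.mem_univ _) hn
  have col1 : ∀ (k : ℕ) (hk : k < d₁),
      ((canonicalSkew (2*d₁+d₀) d₁ η)ᵀ.mulVec u) ⟨2*k+1, by omega⟩
        = -η ⟨k, hk⟩ * u ⟨2*k, by omega⟩ := by
    intro k hk
    rw [expand, Finset.sum_eq_single (⟨2*k, by omega⟩ : Fin (2*d₁+d₀))]
    · simp only [canonicalSkew, Matrix.of_apply, Fin.val_mk]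
      rw [dif_pos (by constructor <;> omega)]
      rw [if_pos (by omega)]
      simp only [show (2*k)/2 = k from by omega]
    · intro b _ hb
      simp only [canonicalSkew, Matrix.of_apply]
      split
      · rename_i hc
        split_ifs with hb1 hb2
        · exfalso; apply hb; apply Fin.ext
          simp only [Fin.val_mk] at *
          omega
        · exfalso; apply hb; apply Fin.ext
          simp only [Fin.val_mk] at *
          omega
        · exact zero_mul _
      · exact zero_mul _
    · intro hn; exact absurd (Finset.mem_univ _) hn
  have colt : ∀ (i : Fin (2*d₁+d₀)), 2*d₁ ≤ i.val →
      ((canonicalSkew (2*d₁+d₀) d₁ η)ᵀ.mulVec u) i = 0 := by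
    intro i hi
    rw [expand]
    apply Finset.sum_eq_zero
    intro j _
    simp only [canonicalSkew, Matrix.of_apply]
    rw [dif_neg, zero_mul]
    rintro ⟨hj1, hj2⟩; omega
  have flip0 : ∀ (k : ℕ) (hk : k < d₁),
      flipIdx d₁ d₀ ⟨2*k, by omega⟩ = ⟨2*k+1, by omega⟩ := by
    intro k hk
    rw [flipIdx, dif_pos (by simp only [Fin.val_mk]; omega),
      dif_pos (by simp only [Fin.val_mk]; omega)]
  have flip1 : ∀ (k : ℕ) (hk : k < d₁),
      flipIdx d₁ d₀ ⟨2*k+1, by omega⟩ = ⟨2*k, by omega⟩ := by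
    intro k hk
    rw [flipIdx, dif_pos (by simp only [Fin.val_mk]; omega),
      dif_neg (by simp only [Fin.val_mk]; omega)]
    exact Fin.ext (by simp only [Fin.val_mk]; omega)
  have flipt : ∀ (i : Fin (2*d₁+d₀)), 2*d₁ ≤ i.val → flipIdx d₁ d₀ i = i := by
    intro i hi; rw [flipIdx, dif_neg (by omega)]
  have keven : ∀ (i : Fin (2*d₁+d₀)), i.val < 2*d₁ → i.val % 2 = 0 →
      ∃ (k : ℕ) (hk : k < d₁), i = ⟨2*k, by omega⟩ :=
    fun i h2 hp => ⟨i.val/2, by omega, Fin.ext (by simp only [Fin.val_mk]; omega)⟩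
  have kodd : ∀ (i : Fin (2*d₁+d₀)), i.val < 2*d₁ → i.val % 2 = 1 →
      ∃ (k : ℕ) (hk : k < d₁), i = ⟨2*k+1, by omega⟩ :=
    fun i h2 hp => ⟨i.val/2, by omega, Fin.ext (by simp only [Fin.val_mk]; omega)⟩
  refine Finset.sum_involution (fun i _ => flipIdx d₁ d₀ i) ?_ ?_
    (fun a ha => Finset.mem_univ _) ?_
  · intro i _
    beta_reduce
    by_cases h2 : i.val < 2*d₁
    · by_cases hp : i.val % 2 = 0
      · obtain ⟨k, hk, hi⟩ := keven i h2 hp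
        rw [hi, flip0 k hk, col0 k hk, col1 k hk, hpair k hk (by omega) (by omega)]
        ring
      · obtain ⟨k, hk, hi⟩ := kodd i h2 (by omega)
        rw [hi, flip1 k hk, col0 k hk, col1 k hk, hpair k hk (by omega) (by omega)]
        ring
    · rw [flipt i (by omega), colt i (by omega)]
      ring
  · intro i _ hf
    beta_reduce
    by_cases h2 : i.val < 2*d₁
    · intro hc
      have hcv := congrArg Fin.val hc
      rw [flipIdx, dif_pos h2] at hcv
      by_cases hp : i.val % 2 = 0
      · rw [dif_pos hp] at hcv; simp only [Fin.val_mk] at hcv; omega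
      · rw [dif_neg hp] at hcv; simp only [Fin.val_mk] at hcv; omega
    · exfalso; apply hf; rw [colt i (by omega)]; ring
  · intro i _
    beta_reduce
    by_cases h2 : i.val < 2*d₁
    · by_cases hp : i.val % 2 = 0
      · obtain ⟨k, hk, hi⟩ := keven i h2 hp
        rw [hi, flip0 k hk, flip1 k hk]
      · obtain ⟨k, hk, hi⟩ := kodd i h2 (by omega)
        rw [hi, flip1 k hk, flip0 k hk]
    · rw [flipt i (by omega), flipt i (by omega)]

/-- With `Λ = OᵀΣ(η)O`, `h` constant on the 2×2 blocks, and the exponential-quadratic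
ansatz `𝓛(w) = exp(∑ᵢ hᵢ (Ow)ᵢ²)`, the drift term `∑ⱼ (wᵀΛ)ⱼ ∂𝓛/∂wⱼ` vanishes. -/
theorem drift_term_vanishes (d₁ d₀ : ℕ) (η : Fin d₁ → ℝ)
    (O : Matrix (Fin (2 * d₁ + d₀)) (Fin (2 * d₁ + d₀)) ℝ) (hO : Oᵀ * O = 1)
    (Λ : Matrix (Fin (2 * d₁ + d₀)) (Fin (2 * d₁ + d₀)) ℝ)
    (hΛ : Λ = Oᵀ * canonicalSkew (2 * d₁ + d₀) d₁ η * O)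
    (h : Fin (2 * d₁ + d₀) → ℝ)
    (hpair : ∀ k : Fin d₁, h (idx0 k) = h (idx1 k))
    (𝓛 : (Fin (2 * d₁ + d₀) → ℝ) → ℝ)
    (h𝓛 : ∀ w, 𝓛 w = Real.exp (∑ i, h i * (O.mulVec w i) ^ 2))
    (w : Fin (2 * d₁ + d₀) → ℝ) :
    ∑ j, (Λᵀ.mulVec w j) * deriv (fun s => 𝓛 (Function.update w j s)) (w j) = 0 := by
  have updVec : ∀ (j : Fin (2 * d₁ + d₀)) (s : ℝ) (i : Fin (2 * d₁ + d₀)),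
      O.mulVec (Function.update w j s) i = O.mulVec w i + (s - w j) * O i j := by
    intro j s i
    simp only [Matrix.mulVec, dotProduct, Function.update_apply]
    rw [show ∑ l, O i l * (if l = j then s else w l)
        = ∑ l, ((if l = j then O i l * (s - w j) else 0) + O i l * w l) from
      Finset.sum_congr rfl fun l _ => by
        split_ifs with hl
        · subst hl; ring
        · rw [zero_add]]
    rw [Finset.sum_add_distrib, Finset.sum_ite_eq' Finset.univ j (fun l => O i l * (s - w j))]
    simp [mul_comm]
    ring
  have hder : ∀ j : Fin (2 * d₁ + d₀), HasDerivAt (fun s => 𝓛 (Function.update w j s))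
      (𝓛 w * ∑ i, 2 * h i * O.mulVec w i * O i j) (w j) := by
    intro j
    have funeq : (fun s => 𝓛 (Function.update w j s))
        = fun s => Real.exp (∑ i, h i * (O.mulVec w i + (s - w j) * O i j) ^ 2) := by
      funext s
      rw [h𝓛]
      congr 1
      exact Finset.sum_congr rfl fun i _ => by rw [updVec]
    rw [funeq]
    have inner : ∀ i : Fin (2 * d₁ + d₀), HasDerivAt
        (fun s => h i * (O.mulVec w i + (s - w j) * O i j) ^ 2)
        (2 * h i * O.mulVec w i * O i j) (w j) := by
      intro i
      have h1 : HasDerivAt (fun s : ℝ => O.mulVec w i + (s - w j) * O i j) (O i j) (w j) := by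
        simpa using (((hasDerivAt_id (w j)).sub_const (w j)).mul_const (O i j)).const_add
          (O.mulVec w i)
      have h3 := (h1.fun_pow 2).const_mul (h i)
      convert h3 using 1
      rfl
      rfl
      simp
      ring
    have hexp := (HasDerivAt.fun_sum (u := Finset.univ) (fun (i : Fin (2 * d₁ + d₀)) _ => inner i)).exp
    convert hexp using 2
    rw [h𝓛]
    exact congrArg Real.exp (Finset.sum_congr rfl fun i _ => by simp)
  have hOO : O * Oᵀ = 1 := mul_eq_one_comm.mp hO
  have hOL : O * Λᵀ = (canonicalSkew (2 * d₁ + d₀) d₁ η)ᵀ * O := by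
    rw [hΛ]
    calc O * (Oᵀ * canonicalSkew (2 * d₁ + d₀) d₁ η * O)ᵀ
        = O * (Oᵀ * ((canonicalSkew (2 * d₁ + d₀) d₁ η)ᵀ * O)) := by
          simp [Matrix.transpose_mul, Matrix.mul_assoc]
      _ = (O * Oᵀ) * ((canonicalSkew (2 * d₁ + d₀) d₁ η)ᵀ * O) := by rw [Matrix.mul_assoc]
      _ = (canonicalSkew (2 * d₁ + d₀) d₁ η)ᵀ * O := by rw [hOO, Matrix.one_mul]
  have hcol : ∀ i : Fin (2 * d₁ + d₀), ∑ j, O i j * Λᵀ.mulVec w j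
      = ((canonicalSkew (2 * d₁ + d₀) d₁ η)ᵀ.mulVec (O.mulVec w)) i := by
    intro i
    rw [Matrix.mulVec_mulVec, ← hOL, ← Matrix.mulVec_mulVec]
    simp [Matrix.mulVec, dotProduct]
  calc ∑ j, (Λᵀ.mulVec w j) * deriv (fun s => 𝓛 (Function.update w j s)) (w j)
      = ∑ j, (Λᵀ.mulVec w j) * (𝓛 w * ∑ i, 2 * h i * O.mulVec w i * O i j) := by
        exact Finset.sum_congr rfl fun j _ => by rw [(hder j).deriv]
    _ = ∑ j, ∑ i, (Λᵀ.mulVec w j) * (𝓛 w * (2 * h i * O.mulVec w i * O i j)) := by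
        exact Finset.sum_congr rfl fun j _ => by rw [Finset.mul_sum, Finset.mul_sum]
    _ = ∑ i, ∑ j, (Λᵀ.mulVec w j) * (𝓛 w * (2 * h i * O.mulVec w i * O i j)) :=
        Finset.sum_comm
    _ = ∑ i, (𝓛 w * 2) * (h i * O.mulVec w i * (∑ j, O i j * Λᵀ.mulVec w j)) := by
        refine Finset.sum_congr rfl fun i _ => ?_
        rw [Finset.mul_sum, Finset.mul_sum]
        exact Finset.sum_congr rfl fun j _ => by ring
    _ = (𝓛 w * 2) * ∑ i, h i * O.mulVec w i
          * ((canonicalSkew (2 * d₁ + d₀) d₁ η)ᵀ.mulVec (O.mulVec w)) i := by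
        rw [Finset.mul_sum]
        exact Finset.sum_congr rfl fun i _ => by rw [hcol]
    _ = 0 := by
        rw [skew_quad_zero d₁ d₀ η h (O.mulVec w)
          (fun k hk h1 h0 => by
            have := hpair ⟨k, hk⟩
            simpa [idx0, idx1] using this), mul_zero]
end

section
/- Let d be a natural number, O a real orthogonal d×d matrix (Oᵀ * O = 1), h : Fin d → ℝ and g : ℝ. Define f : (Fin d → ℝ) → ℝ by f(w) = g · exp( ∑_{i} h i · ((O.mulVec w) i)² ). Then for every w : Fin d → ℝ, ∑_{j} ∂²f/∂wⱼ² (w) = f(w) · ( 4·∑_{i} (h i)² · ((O.mulVec w) i)² + 2·∑_{i} h i ), where ∂²f/∂wⱼ² (w) denotes the second derivative of the function s ↦ f(Function.update w j s) at s = w j. -/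
open Matrix

/-- Laplacian of the exponential-quadratic ansatz: for `O` orthogonal and
`f(w) = g·exp(∑ᵢ hᵢ (Ow)ᵢ²)`, one has
`Δf(w) = f(w)·(4∑ᵢ hᵢ²(Ow)ᵢ² + 2∑ᵢ hᵢ)`. -/
theorem laplacian_exp_quadratic_ansatz (d : ℕ)
    (O : Matrix (Fin d) (Fin d) ℝ) (hO : Oᵀ * O = 1)
    (h : Fin d → ℝ) (g : ℝ)
    (f : (Fin d → ℝ) → ℝ)
    (hf : ∀ w, f w = g * Real.exp (∑ i, h i * (O.mulVec w i) ^ 2))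
    (w : Fin d → ℝ) :
    ∑ j, deriv (deriv (fun s => f (Function.update w j s))) (w j) =
      f w * (4 * ∑ i, (h i) ^ 2 * (O.mulVec w i) ^ 2 + 2 * ∑ i, h i) := by
  classical
  set A : Fin d → ℝ := O.mulVec w with hA
  have hOO : O * Oᵀ = 1 := mul_eq_one_comm.mp hO
  have hrow : ∀ i i', ∑ j, O i j * O i' j = if i = i' then 1 else 0 := by
    intro i i'
    have := congrFun (congrFun hOO i) i'
    simpa [Matrix.mul_apply, Matrix.one_apply, Matrix.transpose_apply] using this
  have hmv : ∀ (j : Fin d) (s : ℝ) (i : Fin d),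
      O.mulVec (Function.update w j s) i = A i + O i j * (s - w j) := by
    intro j s i
    have h1 : (fun k => O i k * Function.update w j s k)
        = Function.update (fun k => O i k * w k) j (O i j * s) := by
      funext k
      by_cases hk : k = j
      · subst hk; simp
      · simp [Function.update_of_ne hk]
    have h2 : O.mulVec (Function.update w j s) i
        = O i j * s + ∑ k ∈ Finset.univ.erase j, O i k * w k := by
      rw [Matrix.mulVec, dotProduct, h1,
        Finset.sum_update_of_mem (Finset.mem_univ j)]
      rw [Finset.sum_sdiff_eq_sub (Finset.subset_univ {j})]
      simp [Finset.sum_erase_eq_sub (Finset.mem_univ j)]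
    have h3 : A i = O i j * w j + ∑ k ∈ Finset.univ.erase j, O i k * w k := by
      rw [hA, Matrix.mulVec, dotProduct,
        ← Finset.add_sum_erase _ _ (Finset.mem_univ j)]
    rw [h2, h3]; ring
  set Q : Fin d → ℝ → ℝ := fun j s => ∑ i, h i * (A i + O i j * (s - w j)) ^ 2 with hQ
  have hFeq : ∀ j, (fun s => f (Function.update w j s)) = fun s => g * Real.exp (Q j s) := by
    intro j; funext s
    rw [hf]
    simp only [hQ, hmv j s]
  have haff : ∀ (j : Fin d) (i : Fin d) (s : ℝ),
      HasDerivAt (fun s : ℝ => A i + O i j * (s - w j)) (O i j) s := by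
    intro j i s
    simpa using (((hasDerivAt_id s).sub_const (w j)).const_mul (O i j)).const_add (A i)
  have hQd : ∀ (j : Fin d) (s : ℝ),
      HasDerivAt (Q j) (∑ i, 2 * h i * (A i + O i j * (s - w j)) * O i j) s := by
    intro j s
    apply HasDerivAt.fun_sum
    intro i _
    have := ((haff j i s).pow 2).const_mul (h i)
    refine this.congr_deriv ?_
    push_cast
    ring
  have hFd : ∀ (j : Fin d) (s : ℝ),
      HasDerivAt (fun s => g * Real.exp (Q j s))
        (g * Real.exp (Q j s) * (∑ i, 2 * h i * (A i + O i j * (s - w j)) * O i j)) s := by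
    intro j s
    have := ((hQd j s).exp).const_mul g
    refine this.congr_deriv ?_
    ring
  have hderiv1 : ∀ j, deriv (fun s => f (Function.update w j s))
      = fun s => g * Real.exp (Q j s) * (∑ i, 2 * h i * (A i + O i j * (s - w j)) * O i j) := by
    intro j
    funext s
    rw [hFeq j]
    exact (hFd j s).deriv
  have hQ'd : ∀ (j : Fin d),
      HasDerivAt (fun s => ∑ i, 2 * h i * (A i + O i j * (s - w j)) * O i j)
        (∑ i, 2 * h i * O i j * O i j) (w j) := by
    intro j
    apply HasDerivAt.fun_sum
    intro i _
    have := ((haff j i (w j)).const_mul (2 * h i)).mul_const (O i j)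
    convert this using 1
  have hderiv2 : ∀ j, deriv (deriv (fun s => f (Function.update w j s))) (w j)
      = g * Real.exp (∑ i, h i * A i ^ 2) *
          ((∑ i, 2 * h i * A i * O i j) ^ 2 + ∑ i, 2 * h i * O i j * O i j) := by
    intro j
    rw [hderiv1 j]
    have hprod : HasDerivAt
        (fun s => g * Real.exp (Q j s) * (∑ i, 2 * h i * (A i + O i j * (s - w j)) * O i j))
        (g * Real.exp (Q j (w j)) * (∑ i, 2 * h i * (A i + O i j * (w j - w j)) * O i j) *
            (∑ i, 2 * h i * (A i + O i j * (w j - w j)) * O i j)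
          + g * Real.exp (Q j (w j)) * (∑ i, 2 * h i * O i j * O i j)) (w j) :=
      (hFd j (w j)).mul (hQ'd j)
    rw [hprod.deriv]
    have hQw : Q j (w j) = ∑ i, h i * A i ^ 2 := by simp [hQ]
    rw [hQw]
    simp only [sub_self, mul_zero, add_zero]
    ring
  simp only [hderiv2]
  rw [← Finset.mul_sum]
  rw [hf w]
  congr 1
  rw [Finset.sum_add_distrib]
  have hsum2 : ∑ j : Fin d, ∑ i, 2 * h i * O i j * O i j = 2 * ∑ i, h i := by
    rw [Finset.sum_comm]
    rw [Finset.mul_sum]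
    refine Finset.sum_congr rfl fun i _ => ?_
    have : ∑ j : Fin d, 2 * h i * O i j * O i j = 2 * h i * ∑ j, O i j * O i j := by
      rw [Finset.mul_sum]; refine Finset.sum_congr rfl fun j _ => by ring
    rw [this, hrow i i]
    simp
  have hsum1 : ∑ j : Fin d, (∑ i, 2 * h i * A i * O i j) ^ 2
      = 4 * ∑ i, h i ^ 2 * A i ^ 2 := by
    have expand : ∀ j : Fin d, (∑ i, 2 * h i * A i * O i j) ^ 2
        = ∑ i, ∑ i', (2 * h i * A i) * (2 * h i' * A i') * (O i j * O i' j) := by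
      intro j
      rw [sq, Finset.sum_mul_sum]
      refine Finset.sum_congr rfl fun i _ => Finset.sum_congr rfl fun i' _ => by ring
    simp only [expand]
    rw [Finset.sum_comm]
    have : ∀ i : Fin d, ∑ j : Fin d, ∑ i', (2 * h i * A i) * (2 * h i' * A i') * (O i j * O i' j)
        = ∑ i', (2 * h i * A i) * (2 * h i' * A i') * (if i = i' then (1:ℝ) else 0) := by
      intro i
      rw [Finset.sum_comm]
      refine Finset.sum_congr rfl fun i' _ => ?_
      rw [← Finset.mul_sum, hrow i i']
    simp only [this]
    simp only [mul_ite, mul_one, mul_zero, Finset.sum_ite_eq, Finset.mem_univ, if_true]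
    rw [Finset.mul_sum]
    refine Finset.sum_congr rfl fun i _ => by ring
  rw [hsum1, hsum2]
end
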